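/- Let Ω ⊂ ℝ^d (d ≥ 1) be a bounded Lebesgue-measurable set with |Ω| > 0, equipped with Lebesgue measure, and let d′ ≥ 1. Let ᾱ > 0, L ≥ 0, let α : [0,1] → [0, ᾱ] be Lipschitz continuous with Lipschitz constant L, and let f ∈ L²(Ω)^{d′}. Let ρ_n, ρ : Ω → [0,1] be measurable with ρ_n → ρ strongly in L²(Ω), let u ∈ L⁴(Ω)^{d′}, and let u_n ∈ L²(Ω)^{d′} with u_n → u strongly in L²(Ω)^{d′}. Then ∫_Ω (α(ρ_n)|u_n|² − 2 f·u_n) dx → ∫_Ω (α(ρ)|u|² − 2 f·u) dx as n → ∞. -/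

import Mathlib

open MeasureTheory Filter
open scoped ENNReal NNReal

section Helpers
variable {X : Type*} [MeasurableSpace X] {μ : Measure X}

lemma l2_mul_integrable {a b : X → ℝ} (ha : MemLp a 2 μ) (hb : MemLp b 2 μ) :
    Integrable (fun x => a x * b x) μ := by
  have h := L2.integrable_inner (𝕜 := ℝ) (ha.toLp a) (hb.toLp b)
  refine h.congr ?_
  filter_upwards [ha.coeFn_toLp, hb.coeFn_toLp] with x h1 h2
  simp [h1, h2, real_inner_comm, mul_comm]

lemma l2_norm_toLp_sq {a : X → ℝ} (ha : MemLp a 2 μ) :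
    ‖ha.toLp a‖ = Real.sqrt (∫ x, a x ^ 2 ∂μ) := by
  have h1 : (‖ha.toLp a‖ : ℝ) ^ 2 = ∫ x, a x ^ 2 ∂μ := by
    rw [← real_inner_self_eq_norm_sq, L2.inner_def]
    refine integral_congr_ae ?_
    filter_upwards [ha.coeFn_toLp] with x h
    simp [h, sq]
  rw [← h1, Real.sqrt_sq (norm_nonneg _)]

lemma l2_cauchy_schwarz {a b : X → ℝ} (ha : MemLp a 2 μ) (hb : MemLp b 2 μ) :
    ∫ x, a x * b x ∂μ ≤ Real.sqrt (∫ x, a x ^ 2 ∂μ) * Real.sqrt (∫ x, b x ^ 2 ∂μ) := by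
  have h1 : ∫ x, a x * b x ∂μ = (inner ℝ (ha.toLp a) (hb.toLp b) : ℝ) := by
    rw [L2.inner_def]
    refine integral_congr_ae ?_
    filter_upwards [ha.coeFn_toLp, hb.coeFn_toLp] with x h1 h2
    simp [h1, h2, real_inner_comm, mul_comm]
  rw [h1, ← l2_norm_toLp_sq ha, ← l2_norm_toLp_sq hb]
  exact real_inner_le_norm _ _

lemma l2_inner_integrable {E : Type*} [NormedAddCommGroup E] [InnerProductSpace ℝ E]
    {f g : X → E} (hf : MemLp f 2 μ) (hg : MemLp g 2 μ) :
    Integrable (fun x => (inner ℝ (f x) (g x) : ℝ)) μ := by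
  have h := L2.integrable_inner (𝕜 := ℝ) (hf.toLp f) (hg.toLp g)
  refine h.congr ?_
  filter_upwards [hf.coeFn_toLp, hg.coeFn_toLp] with x h1 h2
  rw [h1, h2]

lemma ptwise_bound {E : Type*} [NormedAddCommGroup E] [InnerProductSpace ℝ E]
    {abar L a a' r r' : ℝ} (ha0 : 0 ≤ a) (ha : a ≤ abar)
    (hlip : |a - a'| ≤ L * |r - r'|) (F v w : E) :
    |(a * ‖v‖ ^ 2 - 2 * (inner ℝ F v : ℝ)) - (a' * ‖w‖ ^ 2 - 2 * (inner ℝ F w : ℝ))| ≤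
      abar * (‖v - w‖ ^ 2 + 2 * (‖v - w‖ * ‖w‖)) +
        (L * (|r - r'| * ‖w‖ ^ 2) + 2 * (‖F‖ * ‖v - w‖)) := by
  have hI : |(inner ℝ F v : ℝ) - (inner ℝ F w : ℝ)| ≤ ‖F‖ * ‖v - w‖ := by
    rw [← inner_sub_right]; exact abs_real_inner_le_norm _ _
  have hD : |‖v‖ ^ 2 - ‖w‖ ^ 2| ≤ ‖v - w‖ ^ 2 + 2 * (‖v - w‖ * ‖w‖) := by
    have h1 := abs_norm_sub_norm_le v w
    have h2 := norm_nonneg (v - w); have h3 := norm_nonneg w; have h4 := norm_nonneg v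
    rw [abs_le] at h1 ⊢
    constructor <;> nlinarith [h1.1, h1.2]
  have b1 : |a * (‖v‖ ^ 2 - ‖w‖ ^ 2)| ≤ abar * (‖v - w‖ ^ 2 + 2 * (‖v - w‖ * ‖w‖)) := by
    rw [abs_mul, abs_of_nonneg ha0]
    exact mul_le_mul ha hD (abs_nonneg _) (ha0.trans ha)
  have b2 : |(a - a') * ‖w‖ ^ 2| ≤ L * (|r - r'| * ‖w‖ ^ 2) := by
    rw [abs_mul, abs_of_nonneg (sq_nonneg (‖w‖)), ← mul_assoc]
    exact mul_le_mul_of_nonneg_right hlip (sq_nonneg _)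
  have b3 : |2 * ((inner ℝ F v : ℝ) - (inner ℝ F w : ℝ))| ≤ 2 * (‖F‖ * ‖v - w‖) := by
    rw [abs_mul]
    exact mul_le_mul_of_nonneg_left hI (by positivity) |>.trans_eq' (by norm_num)
  have key : (a * ‖v‖ ^ 2 - 2 * (inner ℝ F v : ℝ)) - (a' * ‖w‖ ^ 2 - 2 * (inner ℝ F w : ℝ)) =
      a * (‖v‖ ^ 2 - ‖w‖ ^ 2) + (a - a') * ‖w‖ ^ 2 -
        2 * ((inner ℝ F v : ℝ) - (inner ℝ F w : ℝ)) := by ring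
  rw [key]
  calc |a * (‖v‖ ^ 2 - ‖w‖ ^ 2) + (a - a') * ‖w‖ ^ 2 -
        2 * ((inner ℝ F v : ℝ) - (inner ℝ F w : ℝ))|
      ≤ |a * (‖v‖ ^ 2 - ‖w‖ ^ 2) + (a - a') * ‖w‖ ^ 2| +
        |2 * ((inner ℝ F v : ℝ) - (inner ℝ F w : ℝ))| := abs_sub _ _
    _ ≤ |a * (‖v‖ ^ 2 - ‖w‖ ^ 2)| + |(a - a') * ‖w‖ ^ 2| +
        |2 * ((inner ℝ F v : ℝ) - (inner ℝ F w : ℝ))| := by gcongr; exact abs_add_le _ _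
    _ ≤ _ := by linarith

end Helpers

/-- Continuity of the lower-order part of the Borrvall–Petersson functional under
strong `L²` convergence of `ρ_n` and `u_n`, for Lipschitz `α : [0,1] → [0, ᾱ]` and
`u ∈ L⁴(Ω)^{d'}`. -/
theorem J1_continuity_strong
    {d d' : ℕ} (hd : 1 ≤ d) (hd' : 1 ≤ d')
    (Ω : Set (Fin d → ℝ)) (hΩmeas : MeasurableSet Ω)
    (hΩbdd : Bornology.IsBounded Ω) (hΩpos : 0 < volume Ω)
    (abar L : ℝ) (habar : 0 < abar) (hL : 0 ≤ L)
    (α : ℝ → ℝ)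
    (hαrange : ∀ y ∈ Set.Icc (0 : ℝ) 1, α y ∈ Set.Icc (0 : ℝ) abar)
    -- α is Lipschitz on [0,1] with Lipschitz constant L
    (hαLip : ∀ y ∈ Set.Icc (0 : ℝ) 1, ∀ z ∈ Set.Icc (0 : ℝ) 1, |α y - α z| ≤ L * |y - z|)
    (f : (Fin d → ℝ) → EuclideanSpace ℝ (Fin d'))
    (hf : MemLp f 2 (volume.restrict Ω))
    (ρn : ℕ → (Fin d → ℝ) → ℝ) (ρ : (Fin d → ℝ) → ℝ)
    (hρnmeas : ∀ n, Measurable (ρn n)) (hρmeas : Measurable ρ)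
    (hρn01 : ∀ n x, ρn n x ∈ Set.Icc (0 : ℝ) 1)
    (hρ01 : ∀ x, ρ x ∈ Set.Icc (0 : ℝ) 1)
    -- strong convergence of ρ_n to ρ in L²(Ω)
    (hρstrong : Tendsto (fun n => ∫ x in Ω, (ρn n x - ρ x) ^ 2) atTop (nhds 0))
    (un : ℕ → (Fin d → ℝ) → EuclideanSpace ℝ (Fin d'))
    (u : (Fin d → ℝ) → EuclideanSpace ℝ (Fin d'))
    (hun : ∀ n, MemLp (un n) 2 (volume.restrict Ω))
    (hu : MemLp u 4 (volume.restrict Ω))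
    -- strong convergence of u_n to u in L²(Ω)
    (hustrong : Tendsto (fun n => ∫ x in Ω, ‖un n x - u x‖ ^ 2) atTop (nhds 0)) :
    Tendsto (fun n =>
        ∫ x in Ω, (α (ρn n x) * ‖un n x‖ ^ 2 - 2 * (inner ℝ (f x) (un n x) : ℝ)))
      atTop
      (nhds (∫ x in Ω, (α (ρ x) * ‖u x‖ ^ 2 - 2 * (inner ℝ (f x) (u x) : ℝ)))) := by
  set μ := volume.restrict Ω with hμ
  haveI : IsFiniteMeasure μ :=
    ⟨by rw [hμ, Measure.restrict_apply_univ]; exact hΩbdd.measure_lt_top⟩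
  -- basic MemLp facts
  have huL2 : MemLp u 2 μ := hu.mono_exponent (by norm_num)
  have hsub : ∀ n, MemLp (fun x => un n x - u x) 2 μ := fun n => (hun n).sub huL2
  have hbdd2 : ∀ g : (Fin d → ℝ) → ℝ, Measurable g → (∀ x, g x ∈ Set.Icc (0 : ℝ) 1) →
      MemLp g 2 μ := by
    intro g hg h01
    refine (memLp_top_of_bound hg.aestronglyMeasurable 1 (Eventually.of_forall fun x => ?_)
      ).mono_exponent le_top
    rw [Real.norm_eq_abs, abs_le]
    exact ⟨by linarith [(h01 x).1], (h01 x).2⟩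
  have hρsub : ∀ n, MemLp (fun x => ρn n x - ρ x) 2 μ := fun n =>
    (hbdd2 _ (hρnmeas n) (hρn01 n)).sub (hbdd2 _ hρmeas hρ01)
  have huSq : MemLp (fun x => ‖u x‖ ^ 2) 2 μ := by
    have h := (memLp_norm_rpow_iff (p := 4) (q := 2) hu.aestronglyMeasurable two_ne_zero
      ENNReal.ofNat_ne_top).mpr hu
    have heq : ∀ t : ℝ, t ^ ((2 : ℝ≥0∞).toReal) = t ^ 2 := fun t => by
      rw [ENNReal.toReal_ofNat, show (2 : ℝ) = ((2 : ℕ) : ℝ) by norm_num, Real.rpow_natCast]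
    rw [show (4 : ℝ≥0∞) / 2 = 2 by
        rw [eq_comm, ENNReal.eq_div_iff two_ne_zero ENNReal.ofNat_ne_top]; norm_num,
      show (fun x => ‖u x‖ ^ ((2 : ℝ≥0∞)).toReal) = fun x => ‖u x‖ ^ 2 from
        funext fun x => heq _] at h
    exact h
  -- measurability of α ∘ g
  have hαcont : ContinuousOn α (Set.Icc (0 : ℝ) 1) := by
    refine (LipschitzOnWith.of_dist_le_mul (K := L.toNNReal) (fun y hy z hz => ?_)).continuousOn
    rw [Real.dist_eq, Real.dist_eq, Real.coe_toNNReal _ hL]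
    exact hαLip y hy z hz
  have hcomp : ∀ g : (Fin d → ℝ) → ℝ, Measurable g → (∀ x, g x ∈ Set.Icc (0 : ℝ) 1) →
      Measurable fun x => α (g x) := by
    intro g hg h01
    have : (fun x => α (g x)) =
        (Set.Icc (0 : ℝ) 1).restrict α ∘ fun x => (⟨g x, h01 x⟩ : Set.Icc (0 : ℝ) 1) := rfl
    rw [this]
    exact (continuousOn_iff_continuous_restrict.mp hαcont).measurable.comp (hg.subtype_mk)
  -- integrability of the integrands
  have hInt : ∀ (g : (Fin d → ℝ) → EuclideanSpace ℝ (Fin d')) (hg : MemLp g 2 μ)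
      (r : (Fin d → ℝ) → ℝ) (hr : Measurable r) (hr01 : ∀ x, r x ∈ Set.Icc (0 : ℝ) 1),
      Integrable (fun x => α (r x) * ‖g x‖ ^ 2 - 2 * (inner ℝ (f x) (g x) : ℝ)) μ := by
    intro g hg r hr hr01
    refine Integrable.sub ?_ (((l2_inner_integrable hf hg)).const_mul 2)
    refine Integrable.bdd_mul hg.norm.integrable_sq
      (c := abar) (hcomp r hr hr01).aestronglyMeasurable (Eventually.of_forall fun x => ?_)
    rw [Real.norm_eq_abs, abs_of_nonneg (hαrange _ (hr01 x)).1]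
    exact (hαrange _ (hr01 x)).2
  have hIn : ∀ n, Integrable
      (fun x => α (ρn n x) * ‖un n x‖ ^ 2 - 2 * (inner ℝ (f x) (un n x) : ℝ)) μ :=
    fun n => hInt (un n) (hun n) (ρn n) (hρnmeas n) (hρn01 n)
  have hI : Integrable (fun x => α (ρ x) * ‖u x‖ ^ 2 - 2 * (inner ℝ (f x) (u x) : ℝ)) μ :=
    hInt u huL2 ρ hρmeas hρ01
  -- the constants
  set S2 : ℝ := Real.sqrt (∫ x, ‖u x‖ ^ 2 ∂μ) with hS2
  set S4 : ℝ := Real.sqrt (∫ x, (‖u x‖ ^ 2) ^ 2 ∂μ) with hS4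
  set F2 : ℝ := Real.sqrt (∫ x, ‖f x‖ ^ 2 ∂μ) with hF2
  set ε : ℕ → ℝ := fun n => ∫ x, ‖un n x - u x‖ ^ 2 ∂μ with hε
  set δ : ℕ → ℝ := fun n => ∫ x, (ρn n x - ρ x) ^ 2 ∂μ with hδ
  set C : ℕ → ℝ := fun n =>
    abar * (ε n + 2 * (Real.sqrt (ε n) * S2)) +
      (L * (Real.sqrt (δ n) * S4) + 2 * (F2 * Real.sqrt (ε n))) with hC
  have hεt : Tendsto ε atTop (nhds 0) := hustrong
  have hδt : Tendsto δ atTop (nhds 0) := hρstrong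
  have hsqε : Tendsto (fun n => Real.sqrt (ε n)) atTop (nhds 0) := by
    have := (Real.continuous_sqrt.tendsto 0).comp hεt
    simpa [Function.comp_def] using this
  have hsqδ : Tendsto (fun n => Real.sqrt (δ n)) atTop (nhds 0) := by
    have := (Real.continuous_sqrt.tendsto 0).comp hδt
    simpa [Function.comp_def] using this
  have hCt : Tendsto C atTop (nhds 0) := by
    have : Tendsto C atTop (nhds
        (abar * (0 + 2 * (0 * S2)) + (L * (0 * S4) + 2 * (F2 * 0)))) := by
      refine Tendsto.add (Tendsto.const_mul _ (hεt.add (Tendsto.const_mul _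
        (hsqε.mul tendsto_const_nhds)))) (Tendsto.add (Tendsto.const_mul _
        (hsqδ.mul tendsto_const_nhds)) (Tendsto.const_mul _
        (tendsto_const_nhds.mul hsqε)))
    simpa using this
  -- the key estimate
  have key : ∀ n,
      |(∫ x, (α (ρn n x) * ‖un n x‖ ^ 2 - 2 * (inner ℝ (f x) (un n x) : ℝ)) ∂μ) -
        ∫ x, (α (ρ x) * ‖u x‖ ^ 2 - 2 * (inner ℝ (f x) (u x) : ℝ)) ∂μ| ≤ C n := by
    intro n
    rw [← integral_sub (hIn n) hI]
    -- integrable pieces of the dominating function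
    have Iq1 : Integrable (fun x => ‖un n x - u x‖ * ‖un n x - u x‖) μ :=
      l2_mul_integrable (hsub n).norm (hsub n).norm
    have Iq2 : Integrable (fun x => ‖un n x - u x‖ * ‖u x‖) μ :=
      l2_mul_integrable (hsub n).norm huL2.norm
    have Iq3 : Integrable (fun x => |ρn n x - ρ x| * ‖u x‖ ^ 2) μ :=
      l2_mul_integrable (hρsub n).norm huSq
    have Iq4 : Integrable (fun x => ‖f x‖ * ‖un n x - u x‖) μ :=
      l2_mul_integrable hf.norm (hsub n).norm
    have Iq1' : Integrable (fun x => ‖un n x - u x‖ ^ 2) μ := by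
      simpa [sq] using Iq1
    have hH : Integrable (fun x =>
        abar * (‖un n x - u x‖ ^ 2 + 2 * (‖un n x - u x‖ * ‖u x‖)) +
          (L * (|ρn n x - ρ x| * ‖u x‖ ^ 2) + 2 * (‖f x‖ * ‖un n x - u x‖))) μ :=
      ((Iq1'.add (Iq2.const_mul 2)).const_mul abar).add
        ((Iq3.const_mul L).add (Iq4.const_mul 2))
    have step1 : |∫ x, ((α (ρn n x) * ‖un n x‖ ^ 2 - 2 * (inner ℝ (f x) (un n x) : ℝ)) -
          (α (ρ x) * ‖u x‖ ^ 2 - 2 * (inner ℝ (f x) (u x) : ℝ))) ∂μ| ≤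
        ∫ x, (abar * (‖un n x - u x‖ ^ 2 + 2 * (‖un n x - u x‖ * ‖u x‖)) +
          (L * (|ρn n x - ρ x| * ‖u x‖ ^ 2) + 2 * (‖f x‖ * ‖un n x - u x‖))) ∂μ := by
      rw [← Real.norm_eq_abs]
      refine (norm_integral_le_integral_norm _).trans ?_
      refine integral_mono_of_nonneg (Eventually.of_forall fun x => norm_nonneg _) hH
        (Eventually.of_forall fun x => ?_)
      simp only [Real.norm_eq_abs]
      exact ptwise_bound (hαrange _ (hρn01 n x)).1 (hαrange _ (hρn01 n x)).2
        (hαLip _ (hρn01 n x) _ (hρ01 x)) (f x) (un n x) (u x)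
    refine step1.trans ?_
    have split : ∫ x, (abar * (‖un n x - u x‖ ^ 2 + 2 * (‖un n x - u x‖ * ‖u x‖)) +
          (L * (|ρn n x - ρ x| * ‖u x‖ ^ 2) + 2 * (‖f x‖ * ‖un n x - u x‖))) ∂μ =
        abar * ((∫ x, ‖un n x - u x‖ ^ 2 ∂μ) + 2 * ∫ x, ‖un n x - u x‖ * ‖u x‖ ∂μ) +
          (L * ∫ x, |ρn n x - ρ x| * ‖u x‖ ^ 2 ∂μ +
            2 * ∫ x, ‖f x‖ * ‖un n x - u x‖ ∂μ) := by
      have A1 : Integrable (fun x => ‖un n x - u x‖ ^ 2 +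
          2 * (‖un n x - u x‖ * ‖u x‖)) μ := by exact Iq1'.add (Iq2.const_mul 2)
      have A2 : Integrable (fun x => 2 * (‖un n x - u x‖ * ‖u x‖)) μ := by
        exact Iq2.const_mul 2
      have B1 : Integrable (fun x =>
          abar * (‖un n x - u x‖ ^ 2 + 2 * (‖un n x - u x‖ * ‖u x‖))) μ := by
        exact A1.const_mul abar
      have B2 : Integrable (fun x => L * (|ρn n x - ρ x| * ‖u x‖ ^ 2)) μ := by
        exact Iq3.const_mul L
      have B3 : Integrable (fun x => 2 * (‖f x‖ * ‖un n x - u x‖)) μ := by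
        exact Iq4.const_mul 2
      have B23 : Integrable (fun x => L * (|ρn n x - ρ x| * ‖u x‖ ^ 2) +
          2 * (‖f x‖ * ‖un n x - u x‖)) μ := by exact B2.add B3
      rw [integral_add B1 B23, integral_const_mul _ _, integral_add Iq1' A2, integral_const_mul _ _,
        integral_add B2 B3, integral_const_mul _ _, integral_const_mul _ _]
    rw [split]
    -- Cauchy–Schwarz bounds
    have cs2 : ∫ x, ‖un n x - u x‖ * ‖u x‖ ∂μ ≤ Real.sqrt (ε n) * S2 :=
      l2_cauchy_schwarz (hsub n).norm huL2.norm
    have cs3 : ∫ x, |ρn n x - ρ x| * ‖u x‖ ^ 2 ∂μ ≤ Real.sqrt (δ n) * S4 := by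
      have := l2_cauchy_schwarz (hρsub n).norm huSq
      simpa [sq_abs] using this
    have cs4 : ∫ x, ‖f x‖ * ‖un n x - u x‖ ∂μ ≤ F2 * Real.sqrt (ε n) :=
      l2_cauchy_schwarz hf.norm (hsub n).norm
    simp only [hC, hε, hδ, hS2, hS4, hF2]
    have t1 := mul_le_mul_of_nonneg_left (by linarith [cs2] :
      (∫ x, ‖un n x - u x‖ ^ 2 ∂μ) + 2 * ∫ x, ‖un n x - u x‖ * ‖u x‖ ∂μ ≤
        (∫ x, ‖un n x - u x‖ ^ 2 ∂μ) + 2 * (Real.sqrt (ε n) * S2)) habar.le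
    have t2 := mul_le_mul_of_nonneg_left cs3 hL
    simp only [hε, hδ, hS2, hS4, hF2] at t1 t2 cs4
    linarith [t1, t2, cs4]
  -- conclude via squeeze
  have h0 : Tendsto (fun n =>
      (∫ x, (α (ρn n x) * ‖un n x‖ ^ 2 - 2 * (inner ℝ (f x) (un n x) : ℝ)) ∂μ) -
        ∫ x, (α (ρ x) * ‖u x‖ ^ 2 - 2 * (inner ℝ (f x) (u x) : ℝ)) ∂μ) atTop (nhds 0) :=
    squeeze_zero_norm (fun n => by simpa [Real.norm_eq_abs] using key n) hCt
  have := h0.add (tendsto_const_nhds (x :=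
    ∫ x, (α (ρ x) * ‖u x‖ ^ 2 - 2 * (inner ℝ (f x) (u x) : ℝ)) ∂μ) (f := atTop))
  simpa using this
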